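/- Let V be a finite set of nodes, M a finite family of subsets of V (the monitoring paths), k ≥ 1 a natural number, and F ⊆ V the set of failed nodes with |F| = k. Suppose v ∈ F is k-identifiable with respect to M, i.e., for any two subsets F₁, F₂ ⊆ V with |F₁| ≤ k and |F₂| ≤ k such that v belongs to exactly one of F₁ and F₂, the collections {m ∈ M : m ∩ F₁ ≠ ∅} and {m ∈ M : m ∩ F₂ ≠ ∅} are distinct. Then there exists a path m ∈ M such that m ∩ F = {v}, i.e., m passes through v and through no other failed node. -/
import Mathlib


/-- If `v` is a failed node of the failure set `F` (`|F| = k`, `k ≥ 1`)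
and `v` is `k`-identifiable with respect to the family of monitoring paths `M`
(any two candidate failure sets of size at most `k` differing at `v` cause different
sets of failed paths), then some path `m ∈ M` satisfies `m ∩ F = {v}`. -/
theorem stmt_3 {V : Type*} [Fintype V] [DecidableEq V]
    (M : Finset (Finset V)) (k : ℕ) (hk : 1 ≤ k)
    (F : Finset V) (hF : F.card = k) (v : V) (hv : v ∈ F)
    (hident : ∀ F₁ F₂ : Finset V, F₁.card ≤ k → F₂.card ≤ k →
      Xor' (v ∈ F₁) (v ∈ F₂) →
      M.filter (fun m => (m ∩ F₁).Nonempty) ≠ M.filter (fun m => (m ∩ F₂).Nonempty)) :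
    ∃ m ∈ M, m ∩ F = {v} := by
  have h := hident F (F.erase v) hF.le ((Finset.card_erase_of_mem hv).trans_le (by omega))
    (Or.inl ⟨hv, Finset.notMem_erase v F⟩)
  have h' : ∃ m ∈ M, (m ∩ F).Nonempty ∧ ¬ (m ∩ F.erase v).Nonempty := by
    by_contra hc
    push_neg at hc
    refine h (Finset.ext fun m => ?_)
    simp only [Finset.mem_filter]
    constructor
    · rintro ⟨hmM, hne⟩
      exact ⟨hmM, hc m hmM hne⟩
    · rintro ⟨hmM, hne⟩
      exact ⟨hmM, hne.mono (Finset.inter_subset_inter Finset.Subset.rfl (Finset.erase_subset v F))⟩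
  obtain ⟨m, hmM, hne, hno⟩ := h'
  refine ⟨m, hmM, ?_⟩
  have hempty : m ∩ F.erase v = ∅ := Finset.not_nonempty_iff_eq_empty.mp hno
  ext x
  simp only [Finset.mem_inter, Finset.mem_singleton]
  constructor
  · rintro ⟨hxm, hxF⟩
    by_contra hxv
    exact absurd (Finset.eq_empty_iff_forall_notMem.mp hempty x)
      (by simp [Finset.mem_inter, hxm, Finset.mem_erase, hxv, hxF])
  · intro hx
    subst hx
    obtain ⟨y, hy⟩ := hne
    simp only [Finset.mem_inter] at hy
    have hyx : y = x := by
      by_contra hyv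
      exact absurd (Finset.eq_empty_iff_forall_notMem.mp hempty y)
        (by simp [Finset.mem_inter, hy.1, Finset.mem_erase, hyv, hy.2])
    exact ⟨hyx ▸ hy.1, hv⟩
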